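/- Let τ be a finite unordered rooted tree and H ≥ 1. If, for every height 0 ≤ h < H, all the subtrees of height h appearing in τ are pairwise isomorphic, and if all the subtrees of height H appearing in τ have, for each 0 ≤ h < H, the same number of subtrees of height h rooted at a child of their root, then all the subtrees of height H appearing in τ are pairwise isomorphic. -/

import Mathlib

/-- A finite rooted tree whose vertices form a finite subset `supp` of `ℕ`.
`par` maps each vertex to its parent; the root is a fixed point of `par`
(so it has no parent), and every vertex reaches the root by iterating `par`
(connectedness / acyclicity). -/
structure FTree where
  supp : Finset ℕ
  root : ℕ
  root_mem : root ∈ supp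
  par : ℕ → ℕ
  par_mem : ∀ v ∈ supp, par v ∈ supp
  par_root : par root = root
  reach : ∀ v ∈ supp, ∃ n, par^[n] v = root

namespace FTree

/-- Depth of a vertex: least number of parent steps needed to reach the root. -/
noncomputable def depth (t : FTree) (v : ℕ) : ℕ :=
  if h : v ∈ t.supp then Nat.find (t.reach v h) else 0

/-- `w` is a (weak) descendant of `v` in `t`. -/
def IsDesc (t : FTree) (v w : ℕ) : Prop :=
  w ∈ t.supp ∧ ∃ n ≤ t.depth w, t.par^[n] w = v

open Classical in
/-- Vertex set of the subtree `t[v]` rooted at `v`. -/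
noncomputable def desc (t : FTree) (v : ℕ) : Finset ℕ :=
  t.supp.filter (fun w => t.IsDesc v w)

/-- Height of the subtree `t[v]` rooted at `v`. -/
noncomputable def heightAt (t : FTree) (v : ℕ) : ℕ :=
  (t.desc v).sup (fun w => t.depth w) - t.depth v

/-- Height of the tree. -/
noncomputable def height (t : FTree) : ℕ := t.heightAt t.root

/-- The set of children of `v` in `t`. -/
def children (t : FTree) (v : ℕ) : Finset ℕ :=
  t.supp.filter (fun w => t.par w = v ∧ w ≠ t.root)

open Classical in
/-- `γ_h(v)`: number of children of `v` whose subtree has height `h`. -/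
noncomputable def gam (t : FTree) (v h : ℕ) : ℕ :=
  ((t.children v).filter (fun c => t.heightAt c = h)).card

/-- The subtree of `t` rooted at `v` is isomorphic (as an unordered rooted tree)
to the subtree of `s` rooted at `w`: a bijection between the vertex sets sending
root to root and commuting with the parent maps (i.e. mapping edges to edges). -/
def SubtreeIso (t : FTree) (v : ℕ) (s : FTree) (w : ℕ) : Prop :=
  ∃ φ : ℕ → ℕ, Set.BijOn φ (t.desc v : Set ℕ) (s.desc w : Set ℕ) ∧ φ v = w ∧
    ∀ x ∈ t.desc v, x ≠ v → φ (t.par x) = s.par (φ x)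

/-- Isomorphism of rooted trees. -/
def TreeIso (t s : FTree) : Prop := SubtreeIso t t.root s s.root

/-- A tree is self-nested if any two of its subtrees of the same height
are isomorphic. -/
def SelfNested (t : FTree) : Prop :=
  ∀ v ∈ t.supp, ∀ w ∈ t.supp, t.heightAt v = t.heightAt w → SubtreeIso t v t w

open Classical in
/-- Height profile entry `ρ_t(h1,h2)`: the multiset (family up to permutation) of
the values `γ_{h2}(v)` over all vertices `v` of `t` with `H(t[v]) = h1`. -/
noncomputable def profile (t : FTree) (h1 h2 : ℕ) : Multiset ℕ :=
  (t.supp.filter (fun v => t.heightAt v = h1)).val.map (fun v => t.gam v h2)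

/-- Number of vertices of `t`. -/
def numV (t : FTree) : ℕ := t.supp.card

/-- `a` is a (weak) ancestor of `b`. -/
def IsAnc (t : FTree) (a b : ℕ) : Prop := ∃ n, t.par^[n] b = a

/-- `a` is a proper ancestor of `b`. -/
def ProperAnc (t : FTree) (a b : ℕ) : Prop := a ≠ b ∧ t.IsAnc a b

/-- `l` is the least common ancestor of `a` and `b`. -/
def IsLCA (t : FTree) (a b l : ℕ) : Prop :=
  l ∈ t.supp ∧ t.IsAnc l a ∧ t.IsAnc l b ∧
    ∀ m ∈ t.supp, t.IsAnc m a → t.IsAnc m b → t.IsAnc m l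

/-- `φ`, restricted to the domain `D ⊆ t.supp`, is a constrained mapping in the
sense of Zhang from `t` to `s`: a one-to-one correspondence preserving the
ancestor order, satisfying moreover Zhang's condition on least common ancestors. -/
def ZhangMapping (t s : FTree) (D : Finset ℕ) (φ : ℕ → ℕ) : Prop :=
  D ⊆ t.supp ∧ (∀ x ∈ D, φ x ∈ s.supp) ∧ Set.InjOn φ (D : Set ℕ) ∧
  (∀ a ∈ D, ∀ b ∈ D, (t.ProperAnc a b ↔ s.ProperAnc (φ a) (φ b))) ∧
  (∀ v1 ∈ D, ∀ v2 ∈ D, ∀ v3 ∈ D, ∀ l l',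
    t.IsLCA v1 v2 l → s.IsLCA (φ v1) (φ v2) l' →
    (t.ProperAnc l v3 ↔ s.ProperAnc l' (φ v3)))

/-- Allowed inserting operation (AI): adding a new internal vertex `w` as a child of
`v`, making `w` the parent of the child `c` of `v`; allowed only if
`H(t[c]) + 1 < H(t[v])`. -/
def InsertAI (t θ : FTree) : Prop :=
  ∃ v c w, v ∈ t.supp ∧ c ∈ t.children v ∧ w ∉ t.supp ∧
    t.heightAt c + 1 < t.heightAt v ∧
    θ.supp = insert w t.supp ∧ θ.root = t.root ∧
    θ.par w = v ∧ θ.par c = w ∧ ∀ x ∈ t.supp, x ≠ c → θ.par x = t.par x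

/-- Allowed inserting operation (AS): attaching a tree `s` as a new child subtree of
`v`; allowed only if `H(s) + 1 ≤ H(t[v])`. -/
def InsertAS (t θ : FTree) : Prop :=
  ∃ (v : ℕ) (s : FTree), v ∈ t.supp ∧ Disjoint s.supp t.supp ∧
    s.height + 1 ≤ t.heightAt v ∧
    θ.supp = t.supp ∪ s.supp ∧ θ.root = t.root ∧ θ.par s.root = v ∧
    (∀ x ∈ t.supp, θ.par x = t.par x) ∧ (∀ x ∈ s.supp, x ≠ s.root → θ.par x = s.par x)

/-- One allowed inserting operation. -/
def InsertStep (t θ : FTree) : Prop := InsertAI t θ ∨ InsertAS t θ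

/-- Allowed deleting operation (DI): deleting an internal vertex `v`, child of `u`,
having a unique child `c` (which becomes a child of `u`); allowed only if `u` has
another child `v'` with `H(t[v']) ≥ H(t[v])`. -/
def DeleteDI (t θ : FTree) : Prop :=
  ∃ u v c, v ∈ t.children u ∧ t.children v = {c} ∧
    (∃ v' ∈ t.children u, v' ≠ v ∧ t.heightAt v ≤ t.heightAt v') ∧
    θ.supp = t.supp.erase v ∧ θ.root = t.root ∧ θ.par c = u ∧
    ∀ x ∈ t.supp, x ≠ v → x ≠ c → θ.par x = t.par x

/-- Allowed deleting operation (DS): deleting the whole subtree rooted at a child `w`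
of `v`; allowed only if `v` has another child `w'` with `H(t[w']) + 1 = H(t[v])`. -/
def DeleteDS (t θ : FTree) : Prop :=
  ∃ v w, w ∈ t.children v ∧
    (∃ w' ∈ t.children v, w' ≠ w ∧ t.heightAt w' + 1 = t.heightAt v) ∧
    θ.supp = t.supp \ t.desc w ∧ θ.root = t.root ∧
    ∀ x ∈ θ.supp, θ.par x = t.par x

/-- One allowed deleting operation. -/
def DeleteStep (t θ : FTree) : Prop := DeleteDI t θ ∨ DeleteDS t θ

/-- A general single-vertex inserting operation: a new vertex `w` is added as a child
of `v`, and the vertices of a subset `C` of the children of `v` become children of `w`. -/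
def GeneralInsert (t θ : FTree) : Prop :=
  ∃ (v w : ℕ) (C : Finset ℕ), v ∈ t.supp ∧ w ∉ t.supp ∧ C ⊆ t.children v ∧
    θ.supp = insert w t.supp ∧ θ.root = t.root ∧ θ.par w = v ∧
    (∀ x ∈ C, θ.par x = w) ∧ ∀ x ∈ t.supp, x ∉ C → θ.par x = t.par x

/-- Cost of a constrained mapping with domain `D`: vertices of `t` not in the domain
are deleted, vertices of `s` not in the image are inserted (unit costs). -/
def mappingCost (t s : FTree) (D : Finset ℕ) (φ : ℕ → ℕ) : ℕ :=
  (t.numV - D.card) + (s.numV - (D.image φ).card)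

/-- Zhang's constrained edit distance between unordered trees: the minimal cost
associated with a constrained mapping between `t` and `s`. -/
noncomputable def DZ (t s : FTree) : ℕ :=
  sInf { c | ∃ (D : Finset ℕ) (φ : ℕ → ℕ), ZhangMapping t s D φ ∧ c = mappingCost t s D φ }

end FTree

namespace FTree

variable (t : FTree)

lemma iter_mem {x : ℕ} (hx : x ∈ t.supp) (n : ℕ) : t.par^[n] x ∈ t.supp := by
  induction n with
  | zero => simpa
  | succ n ih => rw [Function.iterate_succ_apply']; exact t.par_mem _ ih

lemma depth_spec {x : ℕ} (hx : x ∈ t.supp) : t.par^[t.depth x] x = t.root := by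
  rw [depth, dif_pos hx]; exact Nat.find_spec (t.reach x hx)

lemma depth_min {x : ℕ} (hx : x ∈ t.supp) {m : ℕ} (hm : m < t.depth x) :
    t.par^[m] x ≠ t.root := by
  rw [depth, dif_pos hx] at hm
  exact Nat.find_min (t.reach x hx) hm

lemma depth_le {x : ℕ} (hx : x ∈ t.supp) {m : ℕ} (h : t.par^[m] x = t.root) :
    t.depth x ≤ m := by
  rw [depth, dif_pos hx]; exact Nat.find_le h

lemma depth_iter {x : ℕ} (hx : x ∈ t.supp) {n : ℕ} (hn : n ≤ t.depth x) :
    t.depth (t.par^[n] x) = t.depth x - n := by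
  have hmem := t.iter_mem hx n
  have h1 : t.par^[t.depth x - n] (t.par^[n] x) = t.root := by
    rw [← Function.iterate_add_apply, Nat.sub_add_cancel hn]; exact t.depth_spec hx
  have h2 : t.depth (t.par^[n] x) ≤ t.depth x - n := t.depth_le hmem h1
  have h3 : t.par^[t.depth (t.par^[n] x) + n] x = t.root := by
    rw [Function.iterate_add_apply]; exact t.depth_spec hmem
  have := t.depth_le hx h3
  omega

lemma mem_desc {v x : ℕ} :
    x ∈ t.desc v ↔ x ∈ t.supp ∧ ∃ n ≤ t.depth x, t.par^[n] x = v := by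
  classical
  rw [desc, Finset.mem_filter]
  unfold IsDesc; tauto

lemma desc_spec {v x : ℕ} (h : x ∈ t.desc v) :
    x ∈ t.supp ∧ t.depth v ≤ t.depth x ∧ t.par^[t.depth x - t.depth v] x = v := by
  obtain ⟨hx, n, hn, hpar⟩ := t.mem_desc.mp h
  have hd := t.depth_iter hx hn
  rw [hpar] at hd
  have hn' : n = t.depth x - t.depth v := by omega
  exact ⟨hx, by omega, hn' ▸ hpar⟩

lemma mem_desc_of {v x : ℕ} (hx : x ∈ t.supp) {n : ℕ} (hn : n ≤ t.depth x)
    (h : t.par^[n] x = v) : x ∈ t.desc v :=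
  t.mem_desc.mpr ⟨hx, n, hn, h⟩

lemma self_mem_desc {v : ℕ} (hv : v ∈ t.supp) : v ∈ t.desc v :=
  t.mem_desc_of hv (Nat.zero_le _) rfl

lemma desc_subset_supp (v : ℕ) : t.desc v ⊆ t.supp :=
  fun _ hx => (t.mem_desc.mp hx).1

lemma mem_supp_of_desc {v x : ℕ} (h : x ∈ t.desc v) : v ∈ t.supp := by
  obtain ⟨hx, n, _, hpar⟩ := t.mem_desc.mp h
  exact hpar ▸ t.iter_mem hx n

lemma mem_children {v c : ℕ} :
    c ∈ t.children v ↔ c ∈ t.supp ∧ t.par c = v ∧ c ≠ t.root := by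
  simp [children, Finset.mem_filter, and_assoc]

lemma depth_pos_of_ne_root {c : ℕ} (hc : c ∈ t.supp) (h : c ≠ t.root) :
    1 ≤ t.depth c := by
  rcases Nat.eq_zero_or_pos (t.depth c) with h0 | h1
  · have := t.depth_spec hc
    rw [h0] at this
    exact absurd this h
  · exact h1

lemma depth_child {v c : ℕ} (hc : c ∈ t.children v) : t.depth c = t.depth v + 1 := by
  obtain ⟨hcs, hpar, hroot⟩ := t.mem_children.mp hc
  have h1 : 1 ≤ t.depth c := t.depth_pos_of_ne_root hcs hroot
  have h2 := t.depth_iter hcs h1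
  simp only [Function.iterate_one, hpar] at h2
  omega

lemma child_mem_desc {v c : ℕ} (hc : c ∈ t.children v) : c ∈ t.desc v := by
  obtain ⟨hcs, hpar, _⟩ := t.mem_children.mp hc
  have h1 : 1 ≤ t.depth c := by
    have := t.depth_child hc; omega
  exact t.mem_desc_of hcs h1 (by simpa using hpar)

lemma desc_trans {v c x : ℕ} (h1 : c ∈ t.desc v) (h2 : x ∈ t.desc c) :
    x ∈ t.desc v := by
  obtain ⟨hcs, hvc, hc⟩ := t.desc_spec h1
  obtain ⟨hxs, hcx, hx⟩ := t.desc_spec h2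
  refine t.mem_desc_of hxs (n := (t.depth c - t.depth v) + (t.depth x - t.depth c))
    (by omega) ?_
  rw [Function.iterate_add_apply, hx, hc]

lemma desc_mono {v c : ℕ} (h : c ∈ t.desc v) : t.desc c ⊆ t.desc v :=
  fun _ hx => t.desc_trans h hx

lemma not_mem_desc_child {v c : ℕ} (hc : c ∈ t.children v) : v ∉ t.desc c := by
  intro h
  have := (t.desc_spec h).2.1
  have := t.depth_child hc
  omega

lemma desc_child_unique {v c c' x : ℕ} (hc : c ∈ t.children v) (hc' : c' ∈ t.children v)
    (hx : x ∈ t.desc c) (hx' : x ∈ t.desc c') : c = c' := by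
  obtain ⟨_, _, h1⟩ := t.desc_spec hx
  obtain ⟨_, _, h2⟩ := t.desc_spec hx'
  rw [t.depth_child hc] at h1
  rw [t.depth_child hc'] at h2
  rw [← h1, ← h2]

lemma par_mem_desc {v x : ℕ} (hx : x ∈ t.desc v) (hne : x ≠ v) :
    t.par x ∈ t.desc v := by
  obtain ⟨hxs, hvx, hpar⟩ := t.desc_spec hx
  have hn1 : 1 ≤ t.depth x - t.depth v := by
    rcases Nat.eq_zero_or_pos (t.depth x - t.depth v) with h0 | h1
    · rw [h0] at hpar; exact absurd hpar hne
    · exact h1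
  have hps : t.par x ∈ t.supp := t.par_mem _ hxs
  have hdp : t.depth (t.par x) = t.depth x - 1 := by
    have h1 : 1 ≤ t.depth x := by omega
    have := t.depth_iter hxs h1
    simpa using this
  refine t.mem_desc_of hps (n := t.depth x - t.depth v - 1) (by omega) ?_
  have : t.par^[t.depth x - t.depth v - 1] (t.par^[1] x) = v := by
    rw [← Function.iterate_add_apply]
    have : t.depth x - t.depth v - 1 + 1 = t.depth x - t.depth v := by omega
    rw [this]; exact hpar
  simpa using this

lemma desc_decomp {v x : ℕ} (hx : x ∈ t.desc v) (hne : x ≠ v) :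
    ∃ c ∈ t.children v, x ∈ t.desc c := by
  obtain ⟨hxs, hvx, hpar⟩ := t.desc_spec hx
  set n := t.depth x - t.depth v with hn
  have hn1 : 1 ≤ n := by
    rcases Nat.eq_zero_or_pos n with h0 | h1
    · rw [h0] at hpar; exact absurd hpar hne
    · exact h1
  refine ⟨t.par^[n-1] x, ?_, ?_⟩
  · refine t.mem_children.mpr ⟨t.iter_mem hxs _, ?_, ?_⟩
    · have h := hpar
      rw [show n = n - 1 + 1 by omega, Function.iterate_succ_apply'] at h
      exact h
    · exact t.depth_min hxs (by omega)
  · exact t.mem_desc_of hxs (by omega) rfl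

lemma sup_desc {v : ℕ} (hv : v ∈ t.supp) :
    (t.desc v).sup t.depth = t.depth v + t.heightAt v := by
  have h1 : t.depth v ≤ (t.desc v).sup t.depth :=
    Finset.le_sup (t.self_mem_desc hv)
  have h2 : ((t.desc v).sup fun w => t.depth w) = (t.desc v).sup t.depth := rfl
  rw [heightAt, h2]
  omega

lemma height_child_lt {v c : ℕ} (hv : v ∈ t.supp) (hc : c ∈ t.children v) :
    t.heightAt c + 1 ≤ t.heightAt v := by
  have hcs : c ∈ t.supp := (t.mem_children.mp hc).1
  have hmono : (t.desc c).sup t.depth ≤ (t.desc v).sup t.depth :=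
    Finset.sup_mono (t.desc_mono (t.child_mem_desc hc))
  rw [t.sup_desc hcs, t.sup_desc hv] at hmono
  have := t.depth_child hc
  omega

end FTree

/-- If, for every height `h < H`, all the subtrees of height `h`
appearing in `t` are pairwise isomorphic, and if all the subtrees of height `H` have,
for each `h < H`, the same number `γ_h` of subtrees of height `h` rooted at a child of
their root, then all the subtrees of height `H` appearing in `t` are pairwise
isomorphic. -/
theorem subtrees_iso_at_height (t : FTree) (H : ℕ) (hH : 1 ≤ H)
    (hlow : ∀ h < H, ∀ v ∈ t.supp, ∀ w ∈ t.supp,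
      t.heightAt v = h → t.heightAt w = h → FTree.SubtreeIso t v t w)
    (hgam : ∀ h < H, ∀ v ∈ t.supp, ∀ w ∈ t.supp,
      t.heightAt v = H → t.heightAt w = H → t.gam v h = t.gam w h) :
    ∀ v ∈ t.supp, ∀ w ∈ t.supp, t.heightAt v = H → t.heightAt w = H →
      FTree.SubtreeIso t v t w := by
  classical
  intro v hv w hw hHv hHw
  set fv : ℕ → Finset ℕ := fun h => (t.children v).filter (fun c => t.heightAt c = h)
    with hfv
  set fw : ℕ → Finset ℕ := fun h => (t.children w).filter (fun c => t.heightAt c = h)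
    with hfw
  have hchildv : ∀ c ∈ t.children v, t.heightAt c < H := fun c hc => by
    have := t.height_child_lt hv hc; omega
  have hchildw : ∀ c ∈ t.children w, t.heightAt c < H := fun c hc => by
    have := t.height_child_lt hw hc; omega
  have hcard : ∀ h, (fv h).card = (fw h).card := by
    intro h
    simp only [hfv, hfw]
    by_cases hh : h < H
    · exact hgam h hh v hv w hw hHv hHw
    · have e1 : (t.children v).filter (fun c => t.heightAt c = h) = ∅ :=
        Finset.filter_false_of_mem (fun c hc hh' => by
          have := hchildv c hc; omega)
      have e2 : (t.children w).filter (fun c => t.heightAt c = h) = ∅ :=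
        Finset.filter_false_of_mem (fun c hc hh' => by
          have := hchildw c hc; omega)
      rw [e1, e2]
  have e : ∀ h : ℕ, {x // x ∈ fv h} ≃ {x // x ∈ fw h} := fun h =>
    Finset.equivOfCardEq (hcard h)
  set ψ : ℕ → ℕ := fun c =>
    if h : c ∈ fv (t.heightAt c) then ((e (t.heightAt c)) ⟨c, h⟩ : ℕ) else c with hψ
  have hmemfv : ∀ c ∈ t.children v, c ∈ fv (t.heightAt c) := fun c hc => by
    simp [hfv, hc]
  have hψval : ∀ (h : ℕ) (c : ℕ) (hm : c ∈ fv h), ψ c = ((e h) ⟨c, hm⟩ : ℕ) := by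
    intro h c hm
    have hm' := hm
    simp only [hfv, Finset.mem_filter] at hm'
    have hh : t.heightAt c = h := hm'.2
    subst hh
    simp only [hψ, dif_pos hm]
  have hψw : ∀ c ∈ t.children v, ψ c ∈ fw (t.heightAt c) := fun c hc => by
    rw [hψval _ c (hmemfv c hc)]
    exact ((e (t.heightAt c)) ⟨c, hmemfv c hc⟩).2
  have hψw' : ∀ c ∈ t.children v,
      ψ c ∈ t.children w ∧ t.heightAt (ψ c) = t.heightAt c := fun c hc => by
    have := hψw c hc
    simp only [hfw, Finset.mem_filter] at this
    exact this
  have hψmem : ∀ c ∈ t.children v, ψ c ∈ t.children w := fun c hc => (hψw' c hc).1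
  have hψh : ∀ c ∈ t.children v, t.heightAt (ψ c) = t.heightAt c := fun c hc =>
    (hψw' c hc).2
  have hψinj : ∀ c ∈ t.children v, ∀ c' ∈ t.children v, ψ c = ψ c' → c = c' := by
    intro c hc c' hc' heq
    have hh : t.heightAt c' = t.heightAt c := by
      rw [← hψh c hc, ← hψh c' hc', heq]
    have hm' : c' ∈ fv (t.heightAt c) := hh ▸ hmemfv c' hc'
    rw [hψval _ c (hmemfv c hc), hψval _ c' hm'] at heq
    have := (e (t.heightAt c)).injective (Subtype.ext heq)
    exact congrArg Subtype.val this
  have hψsurj : ∀ d ∈ t.children w, ∃ c ∈ t.children v, ψ c = d := by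
    intro d hd
    have hdm : d ∈ fw (t.heightAt d) := by simp [hfw, hd]
    have hcm : (((e (t.heightAt d)).symm ⟨d, hdm⟩ : {x // x ∈ fv (t.heightAt d)}) : ℕ)
        ∈ fv (t.heightAt d) := ((e (t.heightAt d)).symm ⟨d, hdm⟩).2
    have hcmem : (((e (t.heightAt d)).symm ⟨d, hdm⟩ :
        {x // x ∈ fv (t.heightAt d)}) : ℕ) ∈ t.children v := by
      have := hcm
      simp only [hfv, Finset.mem_filter] at this
      exact this.1
    refine ⟨_, hcmem, ?_⟩
    rw [hψval _ _ hcm]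
    have h2 : (⟨_, hcm⟩ : {x // x ∈ fv (t.heightAt d)})
        = (e (t.heightAt d)).symm ⟨d, hdm⟩ := Subtype.ext rfl
    rw [h2, Equiv.apply_symm_apply]
  have isoex : ∀ c, ∃ φ : ℕ → ℕ, c ∈ t.children v →
      Set.BijOn φ (t.desc c : Set ℕ) (t.desc (ψ c) : Set ℕ) ∧ φ c = ψ c ∧
      ∀ x ∈ t.desc c, x ≠ c → φ (t.par x) = t.par (φ x) := by
    intro c
    by_cases hc : c ∈ t.children v
    · obtain ⟨φ, h1, h2, h3⟩ := hlow (t.heightAt c) (hchildv c hc) c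
        ((t.mem_children.mp hc).1) (ψ c) ((t.mem_children.mp (hψmem c hc)).1) rfl
        (hψh c hc)
      exact ⟨φ, fun _ => ⟨h1, h2, h3⟩⟩
    · exact ⟨id, fun h => absurd h hc⟩
  choose Φ hΦ using isoex
  have chex : ∀ x, ∃ c, x ∈ t.desc v → x ≠ v → c ∈ t.children v ∧ x ∈ t.desc c := by
    intro x
    by_cases hx : x ∈ t.desc v ∧ x ≠ v
    · obtain ⟨c, hc, hxc⟩ := t.desc_decomp hx.1 hx.2
      exact ⟨c, fun _ _ => ⟨hc, hxc⟩⟩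
    · exact ⟨0, fun h1 h2 => absurd ⟨h1, h2⟩ hx⟩
  choose ch hch using chex
  set φ : ℕ → ℕ := fun x => if x = v then w else Φ (ch x) x with hφ
  have hφv : φ v = w := by simp [hφ]
  have hne_v : ∀ c ∈ t.children v, ∀ x ∈ t.desc c, x ≠ v := by
    intro c hc x hx h
    exact t.not_mem_desc_child hc (h ▸ hx)
  have hsubv : ∀ c ∈ t.children v, t.desc c ⊆ t.desc v := fun c hc =>
    t.desc_mono (t.child_mem_desc hc)
  have hsubw : ∀ c ∈ t.children v, t.desc (ψ c) ⊆ t.desc w := fun c hc =>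
    t.desc_mono (t.child_mem_desc (hψmem c hc))
  have hφeval : ∀ c ∈ t.children v, ∀ x ∈ t.desc c, φ x = Φ c x := by
    intro c hc x hx
    have hxv : x ∈ t.desc v := hsubv c hc hx
    have hxnv : x ≠ v := hne_v c hc x hx
    obtain ⟨h1, h2⟩ := hch x hxv hxnv
    have hcc : ch x = c := t.desc_child_unique h1 hc h2 hx
    simp only [hφ, if_neg hxnv, hcc]
  have hφmem : ∀ c ∈ t.children v, ∀ x ∈ t.desc c, φ x ∈ t.desc (ψ c) := by
    intro c hc x hx
    rw [hφeval c hc x hx]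
    exact Finset.mem_coe.mp ((hΦ c hc).1.mapsTo (Finset.mem_coe.mpr hx))
  refine ⟨φ, ⟨?_, ?_, ?_⟩, hφv, ?_⟩
  · -- MapsTo
    intro x hx
    simp only [Finset.mem_coe] at hx ⊢
    by_cases hxv : x = v
    · subst hxv; rw [hφv]; exact t.self_mem_desc hw
    · obtain ⟨hc, hxc⟩ := hch x hx hxv
      exact hsubw _ hc (hφmem _ hc x hxc)
  · -- InjOn
    intro x hx y hy heq
    simp only [Finset.mem_coe] at hx hy
    by_cases hxv : x = v <;> by_cases hyv : y = v
    · rw [hxv, hyv]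
    · exfalso
      obtain ⟨hc, hyc⟩ := hch y hy hyv
      have h1 : φ y ∈ t.desc (ψ (ch y)) := hφmem _ hc y hyc
      rw [← heq, hxv, hφv] at h1
      exact t.not_mem_desc_child (hψmem _ hc) h1
    · exfalso
      obtain ⟨hc, hxc⟩ := hch x hx hxv
      have h1 : φ x ∈ t.desc (ψ (ch x)) := hφmem _ hc x hxc
      rw [heq, hyv, hφv] at h1
      exact t.not_mem_desc_child (hψmem _ hc) h1
    · obtain ⟨hcx, hxc⟩ := hch x hx hxv
      obtain ⟨hcy, hyc⟩ := hch y hy hyv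
      have h1 : φ x ∈ t.desc (ψ (ch x)) := hφmem _ hcx x hxc
      have h2 : φ y ∈ t.desc (ψ (ch y)) := hφmem _ hcy y hyc
      have hcc : ψ (ch x) = ψ (ch y) :=
        t.desc_child_unique (hψmem _ hcx) (hψmem _ hcy) (heq ▸ h1) h2
      have hceq : ch x = ch y := hψinj _ hcx _ hcy hcc
      rw [hφeval _ hcx x hxc, hφeval _ hcy y hyc, ← hceq] at heq
      exact (hΦ (ch x) hcx).1.injOn (Finset.mem_coe.mpr hxc)
        (Finset.mem_coe.mpr (hceq ▸ hyc)) heq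
  · -- SurjOn
    intro y hy
    simp only [Finset.mem_coe] at hy
    by_cases hyw : y = w
    · exact ⟨v, Finset.mem_coe.mpr (t.self_mem_desc hv), by rw [hφv, hyw]⟩
    · obtain ⟨d, hd, hyd⟩ := t.desc_decomp hy hyw
      obtain ⟨c, hc, hcd⟩ := hψsurj d hd
      rw [← hcd] at hyd
      obtain ⟨x, hx, hxy⟩ := (hΦ c hc).1.surjOn (Finset.mem_coe.mpr hyd)
      refine ⟨x, Finset.mem_coe.mpr (hsubv c hc (Finset.mem_coe.mp hx)), ?_⟩
      rw [hφeval c hc x (Finset.mem_coe.mp hx)]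
      exact hxy
  · -- parent commutation
    intro x hx hxv
    obtain ⟨c, hc, hxc⟩ := t.desc_decomp hx hxv
    by_cases hxc' : x = c
    · subst hxc'
      have hpar : t.par x = v := (t.mem_children.mp hc).2.1
      rw [hpar, hφv, hφeval _ hc x hxc, (hΦ x hc).2.1]
      exact ((t.mem_children.mp (hψmem _ hc)).2.1).symm
    · have hpx : t.par x ∈ t.desc c := t.par_mem_desc hxc hxc'
      rw [hφeval _ hc _ hpx, hφeval _ hc x hxc]
      exact (hΦ c hc).2.2 x hxc hxc'
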